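/- Let n be even with n ≥ 4 and let z, w : ZMod n → ℂ with z_k ≠ 0 and w_k ≠ 0 for all k. Then the following are equivalent: (1) there exists u : ZMod n → ℂ with |u_k| = 1 for all k such that w_k = u_{k+1} * z_k * conj (u_k) for every even k and w_k = u_k * z_k * conj (u_{k+1}) for every odd k (indices modulo n); (2) |w_k| = |z_k| for all k and ∏_{k even} (w_k / z_k) = ∏_{k odd} (w_k / z_k). (This classifies, up to unitary equivalence, the representations of the separated cycle quiver of type Ã_{n−1} in dimension (1,1,…,1): they are determined by the n moduli |z_k| and one angular parameter.) -/

import Mathlib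

open Finset

section Aux

variable {n : ℕ} [NeZero n]

omit [NeZero n] in
lemma aux_even_mod (hne : Even n) (a : ℕ) : Even (a % n) ↔ Even a := by
  rw [Nat.even_iff, Nat.even_iff, Nat.mod_mod_of_dvd a hne.two_dvd]

lemma aux_parity (hn : 4 ≤ n) (hne : Even n) (k : ZMod n) :
    Even ((k + 1).val) ↔ ¬ Even k.val := by
  have h1 : (1 : ZMod n).val = 1 := by
    have : Fact (1 < n) := ⟨by omega⟩
    exact ZMod.val_one n
  rw [ZMod.val_add, h1, aux_even_mod hne]
  rw [Nat.even_iff, Nat.even_iff]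
  omega

lemma aux_shift {p : ZMod n → Prop} [DecidablePred p]
    (hp : ∀ k, p (k + 1) ↔ ¬ p k) (f : ZMod n → ℂ) :
    ∏ k ∈ univ.filter p, f (k + 1) = ∏ k ∈ univ.filter (fun k => ¬ p k), f k := by
  refine Finset.prod_nbij' (fun k => k + 1) (fun k => k - 1) ?_ ?_ ?_ ?_ ?_
  · intro a ha
    simp only [mem_filter, mem_univ, true_and] at ha ⊢
    exact fun h => (hp a).mp h ha
  · intro a ha
    simp only [mem_filter, mem_univ, true_and] at ha ⊢
    have := hp (a - 1)
    rw [sub_add_cancel] at this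
    tauto
  · intro a _; exact add_sub_cancel_right a 1
  · intro a _; exact sub_add_cancel a 1
  · intro a _; rfl

lemma aux_prod_range (f : ZMod n → ℂ) :
    ∏ j ∈ Finset.range n, f (j : ZMod n) = ∏ k : ZMod n, f k := by
  refine Finset.prod_nbij' (fun j => (j : ZMod n)) (fun k => k.val) ?_ ?_ ?_ ?_ ?_
  · intro a _; exact mem_univ _
  · intro a _; exact mem_range.mpr (ZMod.val_lt a)
  · intro a ha; exact ZMod.val_cast_of_lt (mem_range.mp ha)
  · intro a _; exact ZMod.natCast_rightInverse a
  · intro a _; rfl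

end Aux

/-- Classification, up to unitary equivalence, of the representations of the
separated cycle quiver of type `Ã_{n−1}` (with `n` even vertices) in dimension
`(1,…,1)`: two families of nonzero edge values are unitarily equivalent (via
unimodular gauges at the vertices) iff corresponding moduli agree and the products
of the ratios over even and over odd edges coincide. -/
theorem separated_cycle_unitary_equivalence_iff (n : ℕ) (hn : 4 ≤ n) [NeZero n]
    (hne : Even n)
    (z w : ZMod n → ℂ) (hz : ∀ k, z k ≠ 0) (hw : ∀ k, w k ≠ 0) :
    (∃ u : ZMod n → ℂ, (∀ k, ‖u k‖ = 1) ∧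
        ∀ k : ZMod n,
          (Even k.val → w k = u (k + 1) * z k * (starRingEnd ℂ) (u k)) ∧
          (¬ Even k.val → w k = u k * z k * (starRingEnd ℂ) (u (k + 1)))) ↔
    ((∀ k, ‖w k‖ = ‖z k‖) ∧
      ∏ k ∈ Finset.univ.filter (fun k : ZMod n => Even k.val), w k / z k
        = ∏ k ∈ Finset.univ.filter (fun k : ZMod n => ¬ Even k.val), w k / z k) := by
  constructor
  · rintro ⟨u, hu, huz⟩
    have hune : ∀ k, u k ≠ 0 := by
      intro k h
      have := hu k
      rw [h] at this
      simp at this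
    constructor
    · intro k
      by_cases h : Even k.val
      · rw [(huz k).1 h]
        simp [norm_mul, Complex.norm_conj, hu]
      · rw [(huz k).2 h]
        simp [norm_mul, Complex.norm_conj, hu]
    · have he : ∀ k ∈ univ.filter (fun k : ZMod n => Even k.val),
          w k / z k = u (k + 1) * (starRingEnd ℂ) (u k) := by
        intro k hk
        simp only [mem_filter, mem_univ, true_and] at hk
        rw [(huz k).1 hk, div_eq_iff (hz k)]
        ring
      have ho : ∀ k ∈ univ.filter (fun k : ZMod n => ¬ Even k.val),
          w k / z k = u k * (starRingEnd ℂ) (u (k + 1)) := by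
        intro k hk
        simp only [mem_filter, mem_univ, true_and] at hk
        rw [(huz k).2 hk, div_eq_iff (hz k)]
        ring
      rw [Finset.prod_congr rfl he, Finset.prod_congr rfl ho]
      rw [Finset.prod_mul_distrib, Finset.prod_mul_distrib]
      congr 1
      · exact aux_shift (aux_parity hn hne) u
      · have hp' : ∀ k : ZMod n, (¬ Even (k + 1).val) ↔ ¬ ¬ Even k.val :=
          fun k => not_congr (aux_parity hn hne k)
        have h2 := aux_shift (p := fun k : ZMod n => ¬ Even k.val) hp'
          (fun k => (starRingEnd ℂ) (u k))
        rw [h2]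
        apply Finset.prod_congr
        · apply Finset.filter_congr
          intro x _
          simp [not_not]
        · intro x _; rfl
  · rintro ⟨habs, hprod⟩
    set r : ZMod n → ℂ := fun k => w k / z k with hr_def
    have hr : ∀ k, ‖r k‖ = 1 := by
      intro k
      simp only [hr_def, norm_div, habs k]
      exact div_self (fun h => hz k (by simpa using h))
    have hrne : ∀ k, r k ≠ 0 := by
      intro k h
      have := hr k
      rw [h] at this
      simpa using this
    set s : ZMod n → ℂ := fun k => if Even k.val then r k else (starRingEnd ℂ) (r k)
      with hs_def
    have hs : ∀ k, ‖s k‖ = 1 := by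
      intro k
      simp only [hs_def]
      split
      · exact hr k
      · rw [Complex.norm_conj]; exact hr k
    -- total product is 1
    have htot : ∏ k : ZMod n, s k = 1 := by
      rw [← Finset.prod_filter_mul_prod_filter_not univ (fun k : ZMod n => Even k.val)]
      have h1 : ∏ k ∈ univ.filter (fun k : ZMod n => Even k.val), s k
          = ∏ k ∈ univ.filter (fun k : ZMod n => Even k.val), r k := by
        apply Finset.prod_congr rfl
        intro k hk
        simp only [mem_filter, mem_univ, true_and] at hk
        simp [hs_def, hk]
      have h2 : ∏ k ∈ univ.filter (fun k : ZMod n => ¬ Even k.val), s k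
          = (starRingEnd ℂ) (∏ k ∈ univ.filter (fun k : ZMod n => ¬ Even k.val), r k) := by
        rw [map_prod]
        apply Finset.prod_congr rfl
        intro k hk
        simp only [mem_filter, mem_univ, true_and] at hk
        simp [hs_def, hk]
      rw [h1, h2, ← hprod, Complex.mul_conj]
      have : ‖∏ k ∈ univ.filter (fun k : ZMod n => Even k.val), r k‖ = 1 := by
        rw [norm_prod]
        exact Finset.prod_eq_one (fun k _ => hr k)
      rw [Complex.normSq_eq_norm_sq, this]
      norm_num
    set u : ZMod n → ℂ := fun k => ∏ j ∈ Finset.range k.val, s (j : ZMod n) with hu_def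
    have hu : ∀ k, ‖u k‖ = 1 := by
      intro k
      simp only [hu_def]
      rw [norm_prod]
      exact Finset.prod_eq_one (fun j _ => hs _)
    have huc : ∀ k, u k * (starRingEnd ℂ) (u k) = 1 := by
      intro k
      rw [Complex.mul_conj, Complex.normSq_eq_norm_sq, hu k]
      norm_num
    have hstep : ∀ k : ZMod n, u (k + 1) = s k * u k := by
      intro k
      have h1 : (1 : ZMod n).val = 1 := by
        have : Fact (1 < n) := ⟨by omega⟩
        exact ZMod.val_one n
      have hkv := ZMod.val_lt k
      by_cases h : k.val + 1 < n
      · have hval : (k + 1).val = k.val + 1 := by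
          rw [ZMod.val_add, h1, Nat.mod_eq_of_lt h]
        simp only [hu_def, hval, Finset.prod_range_succ, ZMod.natCast_rightInverse k]
        ring
      · have hkn : k.val = n - 1 := by omega
        have hval : (k + 1).val = 0 := by
          rw [ZMod.val_add, h1, hkn]
          have : n - 1 + 1 = n := by omega
          rw [this, Nat.mod_self]
        have hk_eq : ((n - 1 : ℕ) : ZMod n) = k := by
          rw [← hkn]
          exact ZMod.natCast_rightInverse k
        have hrange : ∏ j ∈ Finset.range n, s (j : ZMod n) = 1 := by
          rw [aux_prod_range]
          exact htot
        have hrange' : (∏ j ∈ Finset.range (n - 1), s (j : ZMod n)) * s k = 1 := by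
          rw [← hk_eq, ← Finset.prod_range_succ (fun j : ℕ => s (j : ZMod n)) (n - 1),
            show n - 1 + 1 = n by omega]
          exact hrange
        simp only [hu_def, hval, Finset.prod_range_zero, hkn]
        rw [mul_comm] at hrange'
        exact hrange'.symm
    refine ⟨u, hu, fun k => ⟨fun hk => ?_, fun hk => ?_⟩⟩
    · rw [hstep k]
      have hsk : s k = r k := by simp [hs_def, hk]
      rw [hsk]
      have : r k * u k * z k * (starRingEnd ℂ) (u k)
          = (r k * z k) * (u k * (starRingEnd ℂ) (u k)) := by ring
      rw [this, huc k, mul_one, hr_def]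
      rw [div_mul_cancel₀ _ (hz k)]
    · rw [hstep k]
      have hsk : s k = (starRingEnd ℂ) (r k) := by simp [hs_def, hk]
      rw [hsk, map_mul, Complex.conj_conj]
      have : u k * z k * (r k * (starRingEnd ℂ) (u k))
          = (r k * z k) * (u k * (starRingEnd ℂ) (u k)) := by ring
      rw [this, huc k, mul_one, hr_def]
      rw [div_mul_cancel₀ _ (hz k)]
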